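/- For all primes p ≥ 17, with r = ⌊√p⌋, s = ⌊(p-2)/r⌋, ℓ = ⌊√p/4⌋, the real number N = (p-ℓ-1)(p-1)^2 + ℓ(p^2 - p - (s+1)(r+ℓ) - ℓr + 1) + (s+1)ℓr satisfies N ≥ p^3 - 3p^2 + (1/8)p^{3/2} - (7/16)p. -/
import Mathlib

/-- The size count of the construction satisfies the claimed lower bound. -/
theorem size_count_lower_bound (p : ℕ) (hp : p.Prime) (hp17 : 17 ≤ p)
    (r s l : ℕ) (hr : r = Nat.sqrt p) (hs : s = (p - 2) / r) (hl : l = Nat.sqrt p / 4) :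
    ((p : ℝ) - l - 1) * ((p : ℝ) - 1) ^ 2
      + (l : ℝ) * ((p : ℝ) ^ 2 - p - ((s : ℝ) + 1) * ((r : ℝ) + l) - (l : ℝ) * r + 1)
      + ((s : ℝ) + 1) * (l : ℝ) * (r : ℝ)
    ≥ (p : ℝ) ^ 3 - 3 * (p : ℝ) ^ 2 + (1 / 8) * ((p : ℝ) * Real.sqrt p)
        - (7 / 16) * (p : ℝ) := by
  set x := Real.sqrt p with hx
  have hp0 : (0:ℝ) ≤ p := by positivity
  have hx2 : x ^ 2 = p := Real.sq_sqrt hp0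
  have hx4 : (4:ℝ) ≤ x := by
    have : ((16:ℕ):ℝ) ≤ (p:ℝ) := by exact_mod_cast (by omega : 16 ≤ p)
    calc (4:ℝ) = Real.sqrt 16 := by
          rw [show (16:ℝ) = 4^2 by norm_num, Real.sqrt_sq]; norm_num
      _ ≤ x := Real.sqrt_le_sqrt (by push_cast at this ⊢; linarith)
  -- r bounds
  have hr2 : r ^ 2 ≤ p := by rw [hr]; exact Nat.sqrt_le' p
  have hrR1 : (r:ℝ) ≤ x := by
    rw [hx]
    exact (Real.le_sqrt (by positivity) hp0).mpr (by exact_mod_cast hr2)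
  have hpr : p < (r+1)^2 := by rw [hr]; exact Nat.lt_succ_sqrt' p
  have hrR2 : x - 1 ≤ (r:ℝ) := by
    have h1 : x ≤ (r:ℝ) + 1 := by
      rw [hx]
      have : (p:ℝ) ≤ ((r:ℝ)+1)^2 := by exact_mod_cast hpr.le
      calc Real.sqrt p ≤ Real.sqrt (((r:ℝ)+1)^2) := Real.sqrt_le_sqrt this
        _ = (r:ℝ)+1 := Real.sqrt_sq (by positivity)
    linarith
  -- l bounds
  have hln : 4 * l ≤ r ∧ r ≤ 4 * l + 3 := by omega
  have hlR1 : (l:ℝ) ≤ x / 4 := by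
    have : ((4*l:ℕ):ℝ) ≤ (r:ℝ) := by exact_mod_cast hln.1
    push_cast at this; linarith
  have hlR2 : x / 4 - 1 ≤ (l:ℝ) := by
    have : (r:ℝ) ≤ 4*(l:ℝ) + 3 := by exact_mod_cast hln.2
    linarith
  -- s bounds
  have hr4 : 4 ≤ r := by
    rw [hr]
    exact Nat.le_sqrt.mpr (by omega)
  have hsr : s * r ≤ p - 2 := by rw [hs]; exact Nat.div_mul_le_self _ _
  have hsrR : (s:ℝ) * r ≤ (p:ℝ) - 2 := by
    have : ((s*r:ℕ):ℝ) ≤ ((p-2:ℕ):ℝ) := by exact_mod_cast hsr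
    push_cast [Nat.cast_sub (by omega : 2 ≤ p)] at this
    linarith
  have hsR : (s:ℝ) ≤ x + 2 := by
    have hrpos : (0:ℝ) < r := by exact_mod_cast (by omega : 0 < r)
    nlinarith [hsrR, hrR2, hx2, hx4, mul_pos hrpos hrpos]
  have hl0 : (0:ℝ) ≤ l := Nat.cast_nonneg l
  have hs0 : (0:ℝ) ≤ s := Nat.cast_nonneg s
  nlinarith [mul_nonneg (mul_nonneg hl0 hl0) (by linarith : (0:ℝ) ≤ 2*x + 2 - s - r),
    mul_nonneg (by linarith : (0:ℝ) ≤ x/4 - l) (by linarith : (0:ℝ) ≤ (l:ℝ) - x/4 + 1),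
    mul_nonneg (mul_nonneg (by linarith : (0:ℝ) ≤ x/4 - l) (by linarith : (0:ℝ) ≤ (l:ℝ) - x/4 + 1)) (by linarith : (0:ℝ) ≤ x),
    hx2, hx4, sq_nonneg (x - 4)]
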